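/- arXiv:0909.2670 — 2 statements merged into one kernel-verified Lean document; each statement's English description precedes it below -/
import Mathlib

section
/- Suppose Φ separates V₂. Let n ≥ 1 and let τ ∈ H^{⊗n} be fixed by the diagonal action of g_{f, id_{V₃}} for every f ∈ Φ. Then for every string j ∈ {1,2}ⁿ (no entry equal to 3) having at least one entry equal to 2, the component τ_j ∈ V(j) is zero. (This is the key vanishing step in the proof of Theorem 2.5 of the paper in the top-weight case s = n: an invariant cycle has no components involving the complement V₂ of W₁H + H^{SMT} in strings of maximal weight.) -/
/-!
Context: `K` a field, `V₁, V₂, V₃` finite-dimensional `K`-vector spaces,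
`H = V₁ × V₂ × V₃`, `G_c ≤ GL(V₃)`, `Φ ≤ Hom_K(V₂,V₃)` additive and stable under
composition with `G_c`, `g_{f,S} : (v₁,v₂,v₃) ↦ (v₁, v₂, f v₂ + S v₃)`,
`G = { g_{f,S} : f ∈ Φ, S ∈ G_c }`.  `Φ` separates `V₂` if every nonzero `u ∈ V₂` has
`f ∈ Φ` with `f u ≠ 0`.  Strings `j ∈ {1,2,3}ⁿ` are encoded as `j : Fin n → Fin 3`
(`0` ↦ `V₁`, `1` ↦ `V₂`, `2` ↦ `V₃`); components `τ_j` of `τ` in `H^{⊗n} = ⊕_j V(j)` are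
encoded by quantifying over families `c j ∈ V(j)` with `∑ j, c j = τ`.

Statement 7: suppose `Φ` separates `V₂`.  Let `n ≥ 1` and let `τ ∈ H^{⊗n}` be fixed by the
diagonal action of `g_{f, id}` for every `f ∈ Φ`.  Then for every string `j ∈ {1,2}ⁿ`
(no entry equal to `3`, i.e. `∀ i, j i ≠ 2`) having at least one entry equal to `2`
(i.e. `∃ i, j i = 1`), the component `τ_j ∈ V(j)` is zero.
-/

open scoped TensorProduct

/-- The automorphism `g_{f,S} : (v₁,v₂,v₃) ↦ (v₁, v₂, f v₂ + S v₃)` of `H = V₁ × V₂ × V₃`. -/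
def gfs {K : Type*} [Field K] {V₁ V₂ V₃ : Type*}
    [AddCommGroup V₁] [Module K V₁] [AddCommGroup V₂] [Module K V₂]
    [AddCommGroup V₃] [Module K V₃]
    (f : V₂ →ₗ[K] V₃) (S : V₃ ≃ₗ[K] V₃) :
    (V₁ × V₂ × V₃) ≃ₗ[K] (V₁ × V₂ × V₃) where
  toFun v := (v.1, v.2.1, f v.2.1 + S v.2.2)
  invFun v := (v.1, v.2.1, S.symm (v.2.2 - f v.2.1))
  map_add' a b := by ext <;> simp <;> abel
  map_smul' c a := by ext <;> simp
  left_inv v := by simp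
  right_inv v := by simp

/-- The set `G = { g_{f,S} : f ∈ Φ, S ∈ G_c } ⊆ GL(H)`. -/
def Gset {K : Type*} [Field K] {V₁ V₂ V₃ : Type*}
    [AddCommGroup V₁] [Module K V₁] [AddCommGroup V₂] [Module K V₂]
    [AddCommGroup V₃] [Module K V₃]
    (Gc : Subgroup (V₃ ≃ₗ[K] V₃)) (Φ : AddSubgroup (V₂ →ₗ[K] V₃)) :
    Set ((V₁ × V₂ × V₃) ≃ₗ[K] (V₁ × V₂ × V₃)) :=
  {x | ∃ f ∈ Φ, ∃ S ∈ Gc, x = gfs f S}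

section TensorPowerSetup

variable {K : Type*} [Field K] {V₁ V₂ V₃ : Type*}
  [AddCommGroup V₁] [Module K V₁] [AddCommGroup V₂] [Module K V₂]
  [AddCommGroup V₃] [Module K V₃]

/-- The three summands `V₁ × 0 × 0`, `0 × V₂ × 0`, `0 × 0 × V₃` of `H = V₁ × V₂ × V₃`,
indexed by `Fin 3` (so index `0` corresponds to `V₁`, `1` to `V₂` and `2` to `V₃`). -/
def sel (K : Type*) [Field K] (V₁ V₂ V₃ : Type*)
    [AddCommGroup V₁] [Module K V₁] [AddCommGroup V₂] [Module K V₂]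
    [AddCommGroup V₃] [Module K V₃] :
    Fin 3 → Submodule K (V₁ × V₂ × V₃)
  | 0 => (⊤ : Submodule K V₁).prod (((⊥ : Submodule K V₂)).prod (⊥ : Submodule K V₃))
  | 1 => (⊥ : Submodule K V₁).prod (((⊤ : Submodule K V₂)).prod (⊥ : Submodule K V₃))
  | 2 => (⊥ : Submodule K V₁).prod (((⊥ : Submodule K V₂)).prod (⊤ : Submodule K V₃))

/-- For a string `j : Fin n → Fin 3`, the subspace `V(j) = V_{j 0} ⊗ ⋯ ⊗ V_{j (n-1)}` of
`H^{⊗n}`, realized as the span of the pure tensors whose `i`-th entry lies in the `j i`-th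
summand of `H` (via the canonical inclusions `V_i ↪ H`). -/
def Vstr {n : ℕ} (j : Fin n → Fin 3) :
    Submodule K (⨂[K] (_ : Fin n), (V₁ × V₂ × V₃)) :=
  Submodule.span K
    {x | ∃ v : Fin n → V₁ × V₂ × V₃,
      (∀ i, v i ∈ sel K V₁ V₂ V₃ (j i)) ∧ x = PiTensorProduct.tprod K v}

/-- The diagonal action of `g ∈ GL(H)` on `H^{⊗n}`, with `g` acting as `g^{⊗n}`. -/
noncomputable def actDiag (n : ℕ) (g : (V₁ × V₂ × V₃) ≃ₗ[K] (V₁ × V₂ × V₃)) :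
    (⨂[K] (_ : Fin n), (V₁ × V₂ × V₃)) →ₗ[K] ⨂[K] (_ : Fin n), (V₁ × V₂ × V₃) :=
  PiTensorProduct.map fun _ => g.toLinearMap

/-- The action of `S ∈ GL(V₃)` on `H^{⊗n}`, acting factorwise as the identity on the `V₁`-
and `V₂`-components and as `S` on the `V₃`-component; on the subspace `V(j)` this is exactly
the action of `S` on the tensor factors with `j i = 2` (i.e. the `V₃`-factors) and the
identity on all other factors. -/
noncomputable def actS (n : ℕ) (S : V₃ ≃ₗ[K] V₃) :
    (⨂[K] (_ : Fin n), (V₁ × V₂ × V₃)) →ₗ[K] ⨂[K] (_ : Fin n), (V₁ × V₂ × V₃) :=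
  PiTensorProduct.map fun _ =>
    LinearMap.prodMap LinearMap.id (LinearMap.prodMap LinearMap.id S.toLinearMap)

end TensorPowerSetup

section AuxProof

variable {K : Type*} [Field K] {V₁ V₂ V₃ : Type*}
  [AddCommGroup V₁] [Module K V₁] [AddCommGroup V₂] [Module K V₂]
  [AddCommGroup V₃] [Module K V₃]

/-- Projection of `H` onto its `k`-th summand (as a map `H → H`). -/
def pj (K : Type*) [Field K] {V₁ V₂ V₃ : Type*}
    [AddCommGroup V₁] [Module K V₁] [AddCommGroup V₂] [Module K V₂]
    [AddCommGroup V₃] [Module K V₃] :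
    Fin 3 → ((V₁ × V₂ × V₃) →ₗ[K] (V₁ × V₂ × V₃))
  | 0 => { toFun := fun v => (v.1, 0, 0)
           map_add' := fun a b => by simp [Prod.ext_iff]
           map_smul' := fun c a => by simp [Prod.ext_iff] }
  | 1 => { toFun := fun v => (0, v.2.1, 0)
           map_add' := fun a b => by simp [Prod.ext_iff]
           map_smul' := fun c a => by simp [Prod.ext_iff] }
  | 2 => { toFun := fun v => (0, 0, v.2.2)
           map_add' := fun a b => by simp [Prod.ext_iff]
           map_smul' := fun c a => by simp [Prod.ext_iff] }

@[simp] lemma pj0_apply (v : V₁ × V₂ × V₃) : pj K 0 v = (v.1, 0, 0) := rfl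
@[simp] lemma pj1_apply (v : V₁ × V₂ × V₃) : pj K 1 v = (0, v.2.1, 0) := rfl
@[simp] lemma pj2_apply (v : V₁ × V₂ × V₃) : pj K 2 v = (0, 0, v.2.2) := rfl

/-- The nilpotent part of `g_{f,1}` : `(v₁,v₂,v₃) ↦ (0,0,f v₂)`. -/
def ef (f : V₂ →ₗ[K] V₃) : (V₁ × V₂ × V₃) →ₗ[K] (V₁ × V₂ × V₃) where
  toFun v := (0, 0, f v.2.1)
  map_add' a b := by simp [Prod.ext_iff]
  map_smul' c a := by simp [Prod.ext_iff]

@[simp] lemma ef_apply (f : V₂ →ₗ[K] V₃) (v : V₁ × V₂ × V₃) :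
    ef f v = (0, 0, f v.2.1) := rfl

/-- `(v₁,v₂,v₃) ↦ (0, G (single k v₃), 0)`. -/
def hkmap {ι : Type*} [DecidableEq ι] (G : (ι → V₃) →ₗ[K] V₂) (k : ι) :
    (V₁ × V₂ × V₃) →ₗ[K] (V₁ × V₂ × V₃) where
  toFun v := (0, G (Pi.single k v.2.2), 0)
  map_add' a b := by simp [Prod.ext_iff, Pi.single_add]
  map_smul' c a := by simp [Prod.ext_iff, Pi.single_smul]

@[simp] lemma hkmap_apply {ι : Type*} [DecidableEq ι] (G : (ι → V₃) →ₗ[K] V₂) (k : ι)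
    (v : V₁ × V₂ × V₃) : hkmap G k v = (0, G (Pi.single k v.2.2), 0) := rfl

lemma gfs_lin_apply (f : V₂ →ₗ[K] V₃) (S : V₃ ≃ₗ[K] V₃) (v : V₁ × V₂ × V₃) :
    (gfs f S).toLinearMap v = (v.1, v.2.1, f v.2.1 + S v.2.2) := rfl

lemma mem_sel0 {w : V₁ × V₂ × V₃} :
    w ∈ sel K V₁ V₂ V₃ 0 ↔ w.2.1 = 0 ∧ w.2.2 = 0 := by
  simp [sel, Submodule.mem_prod, Prod.ext_iff]

lemma mem_sel1 {w : V₁ × V₂ × V₃} :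
    w ∈ sel K V₁ V₂ V₃ 1 ↔ w.1 = 0 ∧ w.2.2 = 0 := by
  simp [sel, Submodule.mem_prod]

lemma mem_sel2 {w : V₁ × V₂ × V₃} :
    w ∈ sel K V₁ V₂ V₃ 2 ↔ w.1 = 0 ∧ w.2.1 = 0 := by
  simp [sel, Submodule.mem_prod]

lemma fin3_cases (k : Fin 3) : k = 0 ∨ k = 1 ∨ k = 2 := by
  revert k; decide

lemma map_congr_on_span {n : ℕ} (j : Fin n → Fin 3)
    (q p : Fin n → ((V₁ × V₂ × V₃) →ₗ[K] (V₁ × V₂ × V₃)))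
    (h : ∀ i, ∀ w ∈ sel K V₁ V₂ V₃ (j i), q i w = p i w)
    {x} (hx : x ∈ Vstr j) :
    PiTensorProduct.map q x = PiTensorProduct.map p x := by
  induction hx using Submodule.span_induction with
  | mem x hx =>
    obtain ⟨v, hv, rfl⟩ := hx
    rw [PiTensorProduct.map_tprod, PiTensorProduct.map_tprod]
    exact congrArg (PiTensorProduct.tprod K) (funext fun i => h i (v i) (hv i))
  | zero => simp
  | add x y hx hy ihx ihy => simp [ihx, ihy]
  | smul a x hx ih => simp [ih]

lemma map_zero_on_span {n : ℕ} (j : Fin n → Fin 3)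
    (q : Fin n → ((V₁ × V₂ × V₃) →ₗ[K] (V₁ × V₂ × V₃))) (i₀ : Fin n)
    (h : ∀ w ∈ sel K V₁ V₂ V₃ (j i₀), q i₀ w = 0)
    {x} (hx : x ∈ Vstr j) :
    PiTensorProduct.map q x = 0 := by
  induction hx using Submodule.span_induction with
  | mem x hx =>
    obtain ⟨v, hv, rfl⟩ := hx
    rw [PiTensorProduct.map_tprod]
    exact MultilinearMap.map_coord_zero _ i₀ (h (v i₀) (hv i₀))
  | zero => simp
  | add x y hx hy ihx ihy => simp [ihx, ihy]
  | smul a x hx ih => simp [ih]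

lemma map_id_on_span {n : ℕ} (j : Fin n → Fin 3)
    (q : Fin n → ((V₁ × V₂ × V₃) →ₗ[K] (V₁ × V₂ × V₃)))
    (h : ∀ i, ∀ w ∈ sel K V₁ V₂ V₃ (j i), q i w = w)
    {x} (hx : x ∈ Vstr j) :
    PiTensorProduct.map q x = x := by
  have := map_congr_on_span j q (fun _ => LinearMap.id) (by simpa using h) hx
  rwa [PiTensorProduct.map_id, LinearMap.id_apply] at this

lemma proj_on_span {n : ℕ} (j j' : Fin n → Fin 3)
    {x : ⨂[K] (_ : Fin n), (V₁ × V₂ × V₃)} (hx : x ∈ Vstr j') :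
    PiTensorProduct.map (fun i => pj K (j i)) x = if j = j' then x else 0 := by
  split
  · next hjj =>
    subst hjj
    refine map_id_on_span j _ (fun i w hw => ?_) hx
    show pj K (j i) w = w
    rcases fin3_cases (j i) with h | h | h <;> rw [h] <;> rw [h] at hw
    · rw [mem_sel0] at hw
      simp [Prod.ext_iff, hw.1, hw.2]
    · rw [mem_sel1] at hw
      simp [Prod.ext_iff, hw.1, hw.2]
    · rw [mem_sel2] at hw
      simp [Prod.ext_iff, hw.1, hw.2]
  · next hjj =>
    have : ∃ i, j i ≠ j' i := by
      by_contra hcon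
      push_neg at hcon
      exact hjj (funext hcon)
    obtain ⟨i, hi⟩ := this
    refine map_zero_on_span j' (fun i => pj K (j i)) i (fun w hw => ?_) hx
    show pj K (j i) w = 0
    rcases fin3_cases (j i) with h | h | h <;> rw [h] <;> rw [h] at hi <;>
      rcases fin3_cases (j' i) with h' | h' | h' <;> rw [h'] at hw hi <;>
        first
          | exact absurd rfl hi
          | (first
              | (rw [mem_sel0] at hw; simp [Prod.ext_iff, hw.1, hw.2])
              | (rw [mem_sel1] at hw; simp [Prod.ext_iff, hw.1, hw.2])
              | (rw [mem_sel2] at hw; simp [Prod.ext_iff, hw.1, hw.2]))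

/-- `w ↦ (0, G w, 0)`. -/
def Lmap {ι : Type*} (G : (ι → V₃) →ₗ[K] V₂) :
    (ι → V₃) →ₗ[K] (V₁ × V₂ × V₃) where
  toFun w := (0, G w, 0)
  map_add' a b := by simp [Prod.ext_iff]
  map_smul' c a := by simp [Prod.ext_iff]

@[simp] lemma Lmap_apply {ι : Type*} (G : (ι → V₃) →ₗ[K] V₂) (w : ι → V₃) :
    Lmap (V₁ := V₁) G w = ((0 : V₁), G w, (0 : V₃)) := rfl

lemma reconstruct {n : ℕ} (j : Fin n → Fin 3) (i₀ : Fin n) (hj : j i₀ = 1)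
    {ι : Type*} [Fintype ι] [DecidableEq ι] (fs : ι → (V₂ →ₗ[K] V₃))
    (G : (ι → V₃) →ₗ[K] V₂) (hG : ∀ u, G (fun k => fs k u) = u)
    {x : ⨂[K] (_ : Fin n), (V₁ × V₂ × V₃)} (hx : x ∈ Vstr j) :
    ∑ k : ι, PiTensorProduct.map (fun i => if i = i₀ then hkmap G k else LinearMap.id)
        (PiTensorProduct.map (fun i => if i = i₀ then ef (fs k) else LinearMap.id) x) = x := by
  induction hx using Submodule.span_induction with
  | mem x hx =>
    obtain ⟨v, hv, rfl⟩ := hx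
    have hsel := mem_sel1.mp (by rw [← hj]; exact hv i₀)
    have hterm : ∀ k : ι,
        PiTensorProduct.map (fun i => if i = i₀ then hkmap G k else LinearMap.id)
          (PiTensorProduct.map (fun i => if i = i₀ then ef (fs k) else LinearMap.id)
            (PiTensorProduct.tprod K v))
        = PiTensorProduct.tprod K
            (Function.update v i₀
              (Lmap (V₁ := V₁) G (Pi.single k (fs k ((v i₀).2.1))))) := by
      intro k
      rw [PiTensorProduct.map_tprod, PiTensorProduct.map_tprod]
      refine congrArg (PiTensorProduct.tprod K) (funext fun i => ?_)
      by_cases hi : i = i₀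
      · subst hi
        simp [Function.update_self, Lmap, hkmap]
      · simp [hi, Function.update_of_ne hi]
    rw [Finset.sum_congr rfl (fun k _ => hterm k), ← MultilinearMap.map_update_sum]
    have hsum2 : (∑ k : ι, Lmap (V₁ := V₁) G (Pi.single k (fs k ((v i₀).2.1)))) = v i₀ := by
      rw [← map_sum, Finset.univ_sum_single]
      rw [Lmap_apply, hG]
      simp [Prod.ext_iff, hsel.1, hsel.2]
    rw [hsum2, Function.update_eq_self]
  | zero => simp
  | add x y hx hy ihx ihy => simp [Finset.sum_add_distrib, ihx, ihy]
  | smul a x hx ih =>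
    simp only [map_smul]
    rw [← Finset.smul_sum, ih]

end AuxProof

theorem invariant_tensor_has_no_V2_components
    {K : Type*} [Field K] {V₁ V₂ V₃ : Type*}
    [AddCommGroup V₁] [Module K V₁] [FiniteDimensional K V₁]
    [AddCommGroup V₂] [Module K V₂] [FiniteDimensional K V₂]
    [AddCommGroup V₃] [Module K V₃] [FiniteDimensional K V₃]
    (Gc : Subgroup (V₃ ≃ₗ[K] V₃)) (Φ : AddSubgroup (V₂ →ₗ[K] V₃))
    (hΦ : ∀ S ∈ Gc, ∀ f ∈ Φ, S.toLinearMap ∘ₗ f ∈ Φ)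
    (hsep : ∀ u : V₂, u ≠ 0 → ∃ f ∈ Φ, f u ≠ 0)
    {n : ℕ} (hn : 1 ≤ n)
    (τ : ⨂[K] (_ : Fin n), (V₁ × V₂ × V₃))
    (hτ : ∀ f ∈ Φ, actDiag n (gfs f (1 : V₃ ≃ₗ[K] V₃)) τ = τ)
    (c : (Fin n → Fin 3) → ⨂[K] (_ : Fin n), (V₁ × V₂ × V₃))
    (hc : ∀ j, c j ∈ Vstr j)
    (hsum : ∑ j : Fin n → Fin 3, c j = τ) :
    ∀ j : Fin n → Fin 3, (∀ i, j i ≠ 2) → (∃ i, j i = 1) → c j = 0 := by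
  classical
  intro j hj2 hj1
  obtain ⟨i₀, hi₀⟩ := hj1
  set j' : Fin n → Fin 3 := Function.update j i₀ 2 with hj'def
  have hj'i₀ : j' i₀ = 2 := Function.update_self _ _ _
  have hj'ne : ∀ i, i ≠ i₀ → j' i = j i := fun i hi => Function.update_of_ne hi _ _
  have hjj' : j ≠ j' := by
    intro h
    have h2 := congrFun h i₀
    rw [hi₀, hj'i₀] at h2
    exact absurd h2 (by decide)
  have hj01 : ∀ i, j i = 0 ∨ j i = 1 := by
    intro i
    rcases fin3_cases (j i) with h | h | h
    exacts [Or.inl h, Or.inr h, absurd h (hj2 i)]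
  have hgw : ∀ w : V₁ × V₂ × V₃, ∀ f : V₂ →ₗ[K] V₃,
      (gfs f (1 : V₃ ≃ₗ[K] V₃)).toLinearMap w = (w.1, w.2.1, f w.2.1 + w.2.2) := by
    intro w f; rfl
  have key : ∀ f ∈ Φ, PiTensorProduct.map
      (fun i => if i = i₀ then ef f else LinearMap.id) (c j) = 0 := by
    intro f hf
    have hA : ∀ j'' : Fin n → Fin 3,
        PiTensorProduct.map
          (fun i => pj K (j' i) ∘ₗ (gfs f (1 : V₃ ≃ₗ[K] V₃)).toLinearMap) (c j'')
        = (if j'' = j' then c j' else 0)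
          + (if j'' = j then
              PiTensorProduct.map (fun i => if i = i₀ then ef f else LinearMap.id) (c j)
            else 0) := by
      intro j''
      rcases eq_or_ne j'' j' with h1 | h1
      · rw [if_pos h1, if_neg (fun hh => hjj' (hh.symm.trans h1)), add_zero, h1]
        refine map_id_on_span j' _ (fun i w hw => ?_) (hc j')
        show pj K (j' i) ((gfs f (1 : V₃ ≃ₗ[K] V₃)).toLinearMap w) = w
        rw [hgw]
        by_cases hi : i = i₀
        · subst hi
          rw [hj'i₀] at hw ⊢
          obtain ⟨ha, hb⟩ := mem_sel2.mp hw
          simp [Prod.ext_iff, ha, hb]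
        · rw [hj'ne i hi] at hw ⊢
          rcases hj01 i with h | h <;> rw [h] at hw ⊢
          · obtain ⟨ha, hb⟩ := mem_sel0.mp hw
            simp [Prod.ext_iff, ha, hb]
          · obtain ⟨ha, hb⟩ := mem_sel1.mp hw
            simp [Prod.ext_iff, ha, hb]
      rcases eq_or_ne j'' j with h2 | h2
      · rw [if_neg h1, if_pos h2, zero_add, h2]
        refine map_congr_on_span j _
          (fun i => if i = i₀ then ef f else LinearMap.id) (fun i w hw => ?_) (hc j)
        show pj K (j' i) ((gfs f (1 : V₃ ≃ₗ[K] V₃)).toLinearMap w)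
          = (if i = i₀ then ef f else LinearMap.id) w
        rw [hgw]
        by_cases hi : i = i₀
        · subst hi
          rw [hi₀] at hw
          obtain ⟨ha, hb⟩ := mem_sel1.mp hw
          rw [if_pos rfl, hj'i₀]
          simp [Prod.ext_iff, hb]
        · rw [if_neg hi, hj'ne i hi]
          rcases hj01 i with h | h <;> rw [h] at hw ⊢
          · obtain ⟨ha, hb⟩ := mem_sel0.mp hw
            simp [Prod.ext_iff, ha, hb]
          · obtain ⟨ha, hb⟩ := mem_sel1.mp hw
            simp [Prod.ext_iff, ha, hb]
      · rw [if_neg h1, if_neg h2, add_zero]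
        by_cases hall : ∀ i, i ≠ i₀ → j'' i = j i
        · have h0 : j'' i₀ = 0 := by
            rcases fin3_cases (j'' i₀) with h | h | h
            · exact h
            · exact absurd (funext fun i => by
                by_cases hi : i = i₀
                · subst hi; rw [h, hi₀]
                · exact hall i hi) h2
            · exact absurd (funext fun i => by
                by_cases hi : i = i₀
                · subst hi; rw [h, hj'i₀]
                · rw [hall i hi, hj'ne i hi]) h1
          refine map_zero_on_span j'' _ i₀ (fun w hw => ?_) (hc j'')
          show pj K (j' i₀) ((gfs f (1 : V₃ ≃ₗ[K] V₃)).toLinearMap w) = 0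
          rw [hgw, hj'i₀, h0] at *
          obtain ⟨ha, hb⟩ := mem_sel0.mp hw
          simp [Prod.ext_iff, ha, hb]
        · push_neg at hall
          obtain ⟨i, hi, hne⟩ := hall
          refine map_zero_on_span j'' _ i (fun w hw => ?_) (hc j'')
          show pj K (j' i) ((gfs f (1 : V₃ ≃ₗ[K] V₃)).toLinearMap w) = 0
          rw [hgw, hj'ne i hi]
          rcases hj01 i with h | h <;> rw [h]
          · rcases fin3_cases (j'' i) with h' | h' | h'
            · exact absurd (h'.trans h.symm) hne
            · rw [h'] at hw
              obtain ⟨ha, hb⟩ := mem_sel1.mp hw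
              simp [Prod.ext_iff, ha]
            · rw [h'] at hw
              obtain ⟨ha, hb⟩ := mem_sel2.mp hw
              simp [Prod.ext_iff, ha]
          · rcases fin3_cases (j'' i) with h' | h' | h'
            · rw [h'] at hw
              obtain ⟨ha, hb⟩ := mem_sel0.mp hw
              simp [Prod.ext_iff, ha]
            · exact absurd (h'.trans h.symm) hne
            · rw [h'] at hw
              obtain ⟨ha, hb⟩ := mem_sel2.mp hw
              simp [Prod.ext_iff, hb]
    have hPg : PiTensorProduct.map (fun i => pj K (j' i))
          (actDiag n (gfs f (1 : V₃ ≃ₗ[K] V₃)) τ)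
        = PiTensorProduct.map
            (fun i => pj K (j' i) ∘ₗ (gfs f (1 : V₃ ≃ₗ[K] V₃)).toLinearMap) τ := by
      rw [PiTensorProduct.map_comp]; rfl
    have h1 := congrArg (PiTensorProduct.map (fun i => pj K (j' i))) (hτ f hf)
    rw [hPg, ← hsum, map_sum, map_sum,
      Finset.sum_congr rfl (fun j'' _ => hA j''),
      Finset.sum_congr rfl (fun j'' _ => proj_on_span j' j'' (hc j'')),
      Finset.sum_add_distrib, Finset.sum_ite_eq' Finset.univ j',
      Finset.sum_ite_eq' Finset.univ j, Finset.sum_ite_eq Finset.univ j'] at h1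
    simp only [Finset.mem_univ, if_true] at h1
    exact add_eq_left.mp h1
  -- a finite separating family
  have hfam : ∃ s : Finset (V₂ →ₗ[K] V₃), (↑s : Set (V₂ →ₗ[K] V₃)) ⊆ (Φ : Set _) ∧
      (⨅ f ∈ s, LinearMap.ker f) = ⊥ := by
    have hwf : WellFounded ((· < ·) : Submodule K V₂ → Submodule K V₂ → Prop) :=
      IsWellFounded.wf
    set S : Set (Submodule K V₂) := {W | ∃ s : Finset (V₂ →ₗ[K] V₃),
      (↑s : Set (V₂ →ₗ[K] V₃)) ⊆ (Φ : Set _) ∧ W = ⨅ f ∈ s, LinearMap.ker f} with hSdef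
    have hne : S.Nonempty := ⟨⊤, ∅, by simp, by simp⟩
    obtain ⟨W, hW, hmin⟩ := hwf.has_min S hne
    obtain ⟨s, hsΦ, rfl⟩ := hW
    refine ⟨s, hsΦ, ?_⟩
    by_contra hbot
    obtain ⟨u, huW, hu0⟩ := (Submodule.ne_bot_iff _).mp hbot
    obtain ⟨f, hfΦ, hfu⟩ := hsep u hu0
    have hmem : (⨅ g ∈ insert f s, LinearMap.ker g) ∈ S :=
      ⟨insert f s, by rw [Finset.coe_insert]; exact Set.insert_subset hfΦ hsΦ, rfl⟩
    refine hmin _ hmem ?_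
    rw [Finset.iInf_insert]
    refine lt_of_le_of_ne inf_le_right (fun he => ?_)
    rw [← he] at huW
    exact hfu (huW.1)
  obtain ⟨s, hsΦ, hker⟩ := hfam
  let ι := {g : V₂ →ₗ[K] V₃ // g ∈ s}
  let fs : ι → (V₂ →ₗ[K] V₃) := fun k => k.1
  have hfsΦ : ∀ k : ι, fs k ∈ Φ := fun k => hsΦ k.2
  have hkerpi : LinearMap.ker (LinearMap.pi fs) = ⊥ := by
    rw [LinearMap.ker_pi,
      show (⨅ k : ι, LinearMap.ker (fs k)) = ⨅ g ∈ s, LinearMap.ker g from iInf_subtype]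
    exact hker
  obtain ⟨G, hGF⟩ := LinearMap.exists_leftInverse_of_injective _ hkerpi
  have hG : ∀ u, G (fun k => fs k u) = u := by
    intro u
    have h := LinearMap.congr_fun hGF u
    exact h
  have hrec := reconstruct j i₀ hi₀ fs G hG (hc j)
  rw [← hrec]
  refine Finset.sum_eq_zero fun k _ => ?_
  rw [key (fs k) (hfsΦ k), map_zero]
end

section
/- For a string j ∈ {1,2,3}ⁿ let |j|₃ = #{ i : jᵢ = 3 }, and define the weight filtration on H^{⊗n} by W_k(H^{⊗n}) = ⊕_{ j : 2n − |j|₃ ≤ k } V(j). Then every element g of G, acting diagonally on H^{⊗n}, maps W_k(H^{⊗n}) into itself for every integer k; that is, the diagonal G-action preserves the weight filtration on the tensor power. (This is the abstract form of Lemma 2.3 of the paper — that a nonzero element of V(j₁…jₙ) has weight 2n − |j|₃ — combined with Lemma 2.6, the preservation of the weight filtration by the Mumford–Tate and Galois groups.) -/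
/-!
Context: `K` a field, `V₁, V₂, V₃` finite-dimensional `K`-vector spaces,
`H = V₁ × V₂ × V₃`, `G_c ≤ GL(V₃)`, `Φ ≤ Hom_K(V₂,V₃)` additive and stable under
composition with `G_c`, `g_{f,S} : (v₁,v₂,v₃) ↦ (v₁, v₂, f v₂ + S v₃)`,
`G = { g_{f,S} : f ∈ Φ, S ∈ G_c }`, acting diagonally on `H^{⊗n}`.  Strings
`j ∈ {1,2,3}ⁿ` are encoded as `j : Fin n → Fin 3` (`0` ↦ `V₁`, `1` ↦ `V₂`, `2` ↦ `V₃`),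
so `|j|₃ = #{i : j i = 3}` becomes the cardinality of `{i | j i = 2}`.

Statement 10: with `W_k(H^{⊗n}) = ⊕_{j : 2n − |j|₃ ≤ k} V(j)`, every element `g` of `G`,
acting diagonally on `H^{⊗n}`, maps `W_k(H^{⊗n})` into itself for every integer `k`.
-/

open scoped TensorProduct

theorem diag_action_preserves_weight_filtration
    {K : Type*} [Field K] {V₁ V₂ V₃ : Type*}
    [AddCommGroup V₁] [Module K V₁] [FiniteDimensional K V₁]
    [AddCommGroup V₂] [Module K V₂] [FiniteDimensional K V₂]
    [AddCommGroup V₃] [Module K V₃] [FiniteDimensional K V₃]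
    (Gc : Subgroup (V₃ ≃ₗ[K] V₃)) (Φ : AddSubgroup (V₂ →ₗ[K] V₃))
    (hΦ : ∀ S ∈ Gc, ∀ f ∈ Φ, S.toLinearMap ∘ₗ f ∈ Φ)
    {n : ℕ} (k : ℤ) :
    ∀ g ∈ Gset Gc Φ,
      Submodule.map (actDiag n g)
        (⨆ j ∈ {j : Fin n → Fin 3 |
            (2 * n : ℤ) - ((Finset.univ.filter fun i => j i = 2).card : ℤ) ≤ k},
          Vstr (K := K) (V₁ := V₁) (V₂ := V₂) (V₃ := V₃) j)
      ≤ ⨆ j ∈ {j : Fin n → Fin 3 |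
            (2 * n : ℤ) - ((Finset.univ.filter fun i => j i = 2).card : ℤ) ≤ k},
          Vstr (K := K) (V₁ := V₁) (V₂ := V₂) (V₃ := V₃) j := by
  intro g hg
  obtain ⟨f, hf, S, hS, rfl⟩ := hg
  rw [Submodule.map_iSup]
  refine iSup_le fun j => ?_
  rw [Submodule.map_iSup]
  refine iSup_le fun hj => ?_
  rw [Vstr, Submodule.map_span, Submodule.span_le]
  rintro x ⟨y, ⟨v, hv, rfl⟩, rfl⟩
  rw [actDiag, PiTensorProduct.map_tprod]
  set a : Fin n → V₁ × V₂ × V₃ := fun i => ((v i).1, (v i).2.1, S ((v i).2.2)) with ha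
  set b : Fin n → V₁ × V₂ × V₃ := fun i => (0, 0, f ((v i).2.1)) with hb
  have hab : (fun i => gfs f S (v i)) = a + b := by
    funext i
    show gfs f S (v i) = _
    simp only [gfs, LinearEquiv.coe_mk, ha, hb, Pi.add_apply, Prod.mk_add_mk, add_zero]
    exact Prod.ext rfl (Prod.ext rfl (add_comm _ _))
  simp only [LinearEquiv.coe_coe]
  rw [hab, MultilinearMap.map_add_univ]
  refine Submodule.sum_mem _ fun T _ => ?_
  have haj : ∀ i, a i ∈ sel K V₁ V₂ V₃ (j i) := by
    intro i
    have hvi := hv i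
    have h3 : j i = 0 ∨ j i = 1 ∨ j i = 2 := by omega
    rcases h3 with h | h | h <;> rw [h] at hvi ⊢ <;>
      simp only [sel, Submodule.mem_prod, Submodule.mem_top, Submodule.mem_bot, ha] at hvi ⊢ <;>
      simp [hvi.1, hvi.2.1, hvi.2.2]
  have hk : (2 * n : ℤ) - ((Finset.univ.filter fun i => j i = 2).card : ℤ) ≤ k := hj
  have hsub : (Finset.univ.filter fun i => j i = 2) ⊆
      (Finset.univ.filter fun i => (if i ∈ T then j i else (2 : Fin 3)) = 2) := by
    intro i hi
    simp only [Finset.mem_filter, Finset.mem_univ, true_and] at hi ⊢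
    split <;> simp [hi]
  have hcard := Finset.card_le_card hsub
  refine Submodule.mem_iSup_of_mem (fun i => if i ∈ T then j i else 2) ?_
  refine Submodule.mem_iSup_of_mem (show _ ∈ {j : Fin n → Fin 3 |
      (2 * n : ℤ) - ((Finset.univ.filter fun i => j i = 2).card : ℤ) ≤ k} by
    simp only [Set.mem_setOf_eq]; omega) ?_
  refine Submodule.subset_span ⟨T.piecewise a b, fun i => ?_, rfl⟩
  by_cases h : i ∈ T
  · simpa [Finset.piecewise, h] using haj i
  · simp [Finset.piecewise, h, sel, hb]
end
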